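/- Let A, A_ε be n×n real matrices with the same characteristic polynomial, let 𝒟 and 𝒟_ε be the corresponding horizontal concatenations of adjugate-expansion coefficients, let ε_0, η_0 ∈ ℝ^n be vectors, and suppose 𝒟_ε(I_n ⊗ η_0) is invertible. Define S^ε := 𝒟(I_n ⊗ ε_0)·(𝒟_ε(I_n ⊗ η_0))^{-1}. Then A·S^ε = S^ε·A_ε. -/

import Mathlib

open Matrix Polynomial

/-- The `i`-th matrix coefficient `D_i` of the polynomial expansion
`adj(s I - M) = Σ_i D_i s^i`. -/
noncomputable def adjCoeff (n : ℕ) (M : Matrix (Fin n) (Fin n) ℝ) (i : ℕ) :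
    Matrix (Fin n) (Fin n) ℝ :=
  Matrix.of fun k l => (((charmatrix M).adjugate) k l).coeff i

/-- The horizontal concatenation `𝒟 = [D_0, D_1, …, D_{n-1}]` of the adjugate-expansion
coefficients, an `n × n²` matrix: column `(i, l)` is the `l`-th column of block `D_i`. -/
noncomputable def Dcat (n : ℕ) (M : Matrix (Fin n) (Fin n) ℝ) :
    Matrix (Fin n) (Fin n × Fin n) ℝ :=
  Matrix.of fun k p => (adjCoeff n M p.1) k p.2

/-- The `n² × n` matrix `I_n ⊗ v` for a column vector `v ∈ ℝ^n`
(block-diagonal stacking of the vector `v`). -/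
def kronIdVec (n : ℕ) (v : Fin n → ℝ) : Matrix (Fin n × Fin n) (Fin n) ℝ :=
  Matrix.of fun p j => if p.1 = j then v p.2 else 0

noncomputable def compMat (n : ℕ) (p : ℝ[X]) : Matrix (Fin n) (Fin n) ℝ :=
  Matrix.of fun i j =>
    (if (i : ℕ) + 1 = (j : ℕ) then 1 else 0) - (if (i : ℕ) = n - 1 then p.coeff j else 0)

section aux

variable (n : ℕ) (M : Matrix (Fin n) (Fin n) ℝ)

noncomputable def qpoly : Polynomial (Matrix (Fin n) (Fin n) ℝ) :=
  matPolyEquiv (adjugate (charmatrix M))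

lemma qpoly_eq : (X - C M) * qpoly n M =
    (M.charpoly).map (algebraMap ℝ (Matrix (Fin n) (Fin n) ℝ)) := by
  have h : charmatrix M * adjugate (charmatrix M) = M.charpoly • (1 : Matrix (Fin n) (Fin n) ℝ[X]) :=
    mul_adjugate _
  apply_fun matPolyEquiv at h
  simpa only [qpoly, _root_.map_mul, matPolyEquiv_charmatrix, matPolyEquiv_smul_one] using h

lemma Xm_apply (v : Fin n → ℝ) (l j : Fin n) :
    (Dcat n M * kronIdVec n v) l j = (((qpoly n M).coeff j) *ᵥ v) l := by
  simp only [mul_apply, Dcat, kronIdVec, Matrix.of_apply, Fintype.sum_prod_type, mulVec,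
    dotProduct, qpoly, matPolyEquiv_coeff_apply, adjCoeff]
  rw [Finset.sum_eq_single j]
  · simp
  · intro b _ hb; simp [hb]
  · simp

lemma qpoly_lead (hn : 0 < n) : (qpoly n M).coeff (n - 1) = 1 := by
  have : Nonempty (Fin n) := ⟨⟨0, hn⟩⟩
  have hq := qpoly_eq n M
  set q := qpoly n M with hqdef
  have hmono : (X - C M).Monic := monic_X_sub_C M
  have hmapmono : ((M.charpoly).map (algebraMap ℝ (Matrix (Fin n) (Fin n) ℝ))).Monic :=
    (M.charpoly_monic).map _
  have hqne : q ≠ 0 := by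
    intro h0
    rw [h0, mul_zero] at hq
    exact hmapmono.ne_zero hq.symm
  have hdeg : q.natDegree = n - 1 := by
    have := hmono.natDegree_mul' hqne
    rw [hq, (M.charpoly_monic).natDegree_map, Matrix.charpoly_natDegree_eq_dim] at this
    simp only [natDegree_X_sub_C, Fintype.card_fin] at this
    omega
  have hcoeffn : q.coeff n = 0 := coeff_eq_zero_of_natDegree_lt (by omega)
  obtain ⟨m, hm⟩ : ∃ m, n = m + 1 := ⟨n - 1, by omega⟩
  subst hm
  have h := congrArg (fun p => p.coeff (m + 1)) hq
  simp only [sub_mul, coeff_sub, coeff_X_mul, coeff_C_mul, coeff_map] at h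
  rw [hcoeffn] at h
  have hc1 : M.charpoly.coeff (m + 1) = 1 := by
    have := (M.charpoly_monic).coeff_natDegree
    rwa [Matrix.charpoly_natDegree_eq_dim, Fintype.card_fin] at this
  simp only [hc1, _root_.map_one, mul_zero, sub_zero] at h
  simpa using h

lemma qpoly_rec_succ (j : ℕ) :
    M * (qpoly n M).coeff (j + 1) = (qpoly n M).coeff j - (M.charpoly.coeff (j + 1)) • 1 := by
  have h := congrArg (fun p => p.coeff (j + 1)) (qpoly_eq n M)
  simp only [sub_mul, coeff_sub, coeff_X_mul, coeff_C_mul, coeff_map,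
    Algebra.algebraMap_eq_smul_one] at h
  linear_combination (norm := abel) -h

lemma qpoly_rec_zero :
    M * (qpoly n M).coeff 0 = -(M.charpoly.coeff 0) • 1 := by
  have h := congrArg (fun p => p.coeff 0) (qpoly_eq n M)
  simp only [sub_mul, coeff_sub, mul_coeff_zero, coeff_X_zero, zero_mul, coeff_C_zero,
    coeff_map, Algebra.algebraMap_eq_smul_one, zero_sub] at h
  rw [neg_smul, ← h, neg_neg]

lemma key (v : Fin n → ℝ) :
    M * (Dcat n M * kronIdVec n v) =
      (Dcat n M * kronIdVec n v) * compMat n M.charpoly := by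
  ext k j
  have hn : 0 < n := k.pos
  have hL : (M * (Dcat n M * kronIdVec n v)) k j = ((M * (qpoly n M).coeff j) *ᵥ v) k := by
    rw [← mulVec_mulVec, mulVec, mul_apply]
    simp only [dotProduct, Xm_apply]
  rw [hL, mul_apply]
  have hlast : ((n : ℕ) - 1) < n := by omega
  have hR : ∀ i : Fin n, (Dcat n M * kronIdVec n v) k i * compMat n M.charpoly i j
      = ((qpoly n M).coeff i *ᵥ v) k *
          ((if (i : ℕ) + 1 = (j : ℕ) then 1 else 0)
            - (if (i : ℕ) = n - 1 then M.charpoly.coeff j else 0)) := by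
    intro i; rw [Xm_apply]; rfl
  simp only [hR, mul_sub]
  rw [Finset.sum_sub_distrib]
  have hterm2 : (∑ i : Fin n, ((qpoly n M).coeff i *ᵥ v) k *
      (if (i : ℕ) = n - 1 then M.charpoly.coeff j else 0))
      = M.charpoly.coeff j * v k := by
    rw [Finset.sum_eq_single (⟨n - 1, hlast⟩ : Fin n)]
    · simp [qpoly_lead n M hn, mulVec, dotProduct, Matrix.one_apply, mul_comm]
    · intro b _ hb
      have : (b : ℕ) ≠ n - 1 := fun h => hb (Fin.ext h)
      simp [this]
    · simp
  rw [hterm2]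
  rcases hj0 : (j : ℕ) with _ | jj
  · have hterm1 : (∑ i : Fin n, ((qpoly n M).coeff i *ᵥ v) k *
        (if (i : ℕ) + 1 = 0 then 1 else 0)) = 0 := by
      apply Finset.sum_eq_zero
      intro i _
      simp
    rw [hterm1, qpoly_rec_zero n M]
    simp [mulVec, dotProduct, Matrix.one_apply, mul_comm, neg_smul, Matrix.smul_apply,
      Finset.mul_sum]
  · have hjj : jj < n := by omega
    have hterm1 : (∑ i : Fin n, ((qpoly n M).coeff i *ᵥ v) k *
        (if (i : ℕ) + 1 = jj + 1 then 1 else 0)) = ((qpoly n M).coeff jj *ᵥ v) k := by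
      rw [Finset.sum_eq_single (⟨jj, hjj⟩ : Fin n)]
      · simp
      · intro b _ hb
        have : (b : ℕ) ≠ jj := fun h => hb (Fin.ext h)
        simp [this]
      · simp
    rw [hterm1, qpoly_rec_succ n M jj]
    simp [sub_mulVec, mulVec, dotProduct, Finset.mul_sum, Matrix.one_apply, mul_comm, sub_mul,
      Matrix.smul_apply]
    simp only [mul_sub]
    rw [Finset.sum_sub_distrib]
    congr 1
    simp [mul_ite]

end aux

/-- If `A` and `A_ε` have the same characteristic polynomial and
`𝒟_ε (I_n ⊗ η_0)` is invertible, then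
`S^ε := 𝒟 (I_n ⊗ ε_0) · (𝒟_ε (I_n ⊗ η_0))⁻¹` satisfies `A S^ε = S^ε A_ε`. -/
theorem intertwine_Seps (n : ℕ) (A Aeps : Matrix (Fin n) (Fin n) ℝ)
    (hchar : A.charpoly = Aeps.charpoly)
    (eps0 eta0 : Fin n → ℝ)
    (hinv : IsUnit (Dcat n Aeps * kronIdVec n eta0)) :
    A * (Dcat n A * kronIdVec n eps0 * (Dcat n Aeps * kronIdVec n eta0)⁻¹) =
      (Dcat n A * kronIdVec n eps0 * (Dcat n Aeps * kronIdVec n eta0)⁻¹) * Aeps := by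
  have h1 := key n A eps0
  have h2 := key n Aeps eta0
  rw [hchar] at h1
  set Xm := Dcat n A * kronIdVec n eps0 with hX
  set Y := Dcat n Aeps * kronIdVec n eta0 with hY
  have hdet : IsUnit Y.det := (Matrix.isUnit_iff_isUnit_det Y).mp hinv
  have hYY : Y * Y⁻¹ = 1 := Matrix.mul_nonsing_inv Y hdet
  have hY'Y : Y⁻¹ * Y = 1 := Matrix.nonsing_inv_mul Y hdet
  have hC : compMat n Aeps.charpoly = Y⁻¹ * (Aeps * Y) := by
    rw [h2, ← Matrix.mul_assoc, hY'Y, Matrix.one_mul]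
  calc A * (Xm * Y⁻¹) = (A * Xm) * Y⁻¹ := by simp only [Matrix.mul_assoc]
    _ = Xm * compMat n Aeps.charpoly * Y⁻¹ := by rw [h1]
    _ = Xm * (Y⁻¹ * (Aeps * Y)) * Y⁻¹ := by rw [hC]
    _ = Xm * Y⁻¹ * Aeps * (Y * Y⁻¹) := by
        simp only [Matrix.mul_assoc]
    _ = Xm * Y⁻¹ * Aeps := by rw [hYY, Matrix.mul_one]
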